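/- Let G be an abelian group of order 2n, E a subgroup of index 2, O = G \ E, and 0 ≠ x ∈ E. Let G_x be the Cayley graph on O with edges {y,z} such that y+z = x or ±(y-z) = x. Then e(G_x) ≥ max{ n - r(G), n/2 }, where r(G) = |{a ∈ G : 2a = 0}|. -/

import Mathlib

/-- The Cayley graph `G_S` on the nontrivial coset `O = G \ H` of an index-2 subgroup
`H`: vertices are the elements of `O`, and `{y, z}` (with `y ≠ z`) is an edge iff
`y + z ∈ S` or `y - z ∈ S` or `z - y ∈ S`. -/
def cayley {G : Type*} [AddCommGroup G] (H : AddSubgroup G) (S : Set G) :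
    SimpleGraph {g : G // g ∉ H} where
  Adj y z := y ≠ z ∧ ((y : G) + z ∈ S ∨ (y : G) - z ∈ S ∨ (z : G) - y ∈ S)
  symm := by
    constructor
    rintro y z ⟨h1, h2⟩
    refine ⟨h1.symm, ?_⟩
    rcases h2 with h | h | h
    · exact Or.inl (by rwa [add_comm])
    · exact Or.inr (Or.inr h)
    · exact Or.inr (Or.inl h)
  loopless := by constructor; rintro y ⟨h1, _⟩; exact h1 rfl

/-- For `0 ≠ x ∈ E`, the Cayley graph `G_x` on `O = G \ E` has at least
`max{n - r(G), n/2}` edges, where `r(G) = |{a ∈ G : 2a = 0}|`. -/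
theorem stmt10 {G : Type*} [AddCommGroup G] [Fintype G] {n : ℕ}
    (hn : Fintype.card G = 2 * n) (E : AddSubgroup G) (hE : E.index = 2)
    (x : G) (hx : x ∈ E) (hx0 : x ≠ 0) :
    max ((n : ℚ) - ({a : G | a + a = 0}.ncard : ℚ)) ((n : ℚ) / 2) ≤
      ((cayley E {x}).edgeSet.ncard : ℚ) := by

  classical
  set Γ := cayley E {x} with hG
  -- coset membership facts
  have hmem1 : ∀ y : G, y ∉ E → y + x ∉ E := by
    intro y hy h
    exact hy (by simpa using E.sub_mem h hx)
  have hmem2 : ∀ y : G, y ∉ E → x - y ∉ E := by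
    intro y hy h
    exact hy (by simpa using E.sub_mem hx h)
  -- cardinalities
  have hcardE : Nat.card E = n := by
    have h := E.index_mul_card
    have h2 : Nat.card G = 2 * n := by rw [Nat.card_eq_fintype_card, hn]
    rw [hE] at h
    omega
  have hcardV : Fintype.card {g : G // g ∉ E} = n := by
    have h1 := Fintype.card_subtype_compl (p := fun g : G => g ∈ E)
    have h2 : Fintype.card {g : G // g ∈ E} = n := by
      rw [← Nat.card_eq_fintype_card]
      exact hcardE
    rw [h1, h2, hn]
    omega
  -- the two neighbors
  have hadj1 : ∀ y : {g : G // g ∉ E}, Γ.Adj y ⟨(y : G) + x, hmem1 y y.2⟩ := by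
    intro y
    refine ⟨?_, Or.inr (Or.inr ?_)⟩
    · intro h
      apply hx0
      have h' := congrArg Subtype.val h
      simp only at h'
      have : (y : G) + x = (y : G) + 0 := by rw [add_zero]; exact h'.symm
      exact (add_left_cancel this)
    · simp
  have hadj2 : ∀ y : {g : G // g ∉ E}, (y : G) + y ≠ x →
      Γ.Adj y ⟨x - (y : G), hmem2 y y.2⟩ := by
    intro y hy
    refine ⟨?_, Or.inl ?_⟩
    · intro h
      apply hy
      have h' := congrArg Subtype.val h
      simp only at h'
      rw [eq_sub_iff_add_eq] at h'
      exact h'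
    · simp
  -- degree bounds
  have hdeg1 : ∀ y : {g : G // g ∉ E}, 1 ≤ Γ.degree y := by
    intro y
    have : 0 < Γ.degree y := by
      rw [Γ.degree_pos_iff_exists_adj]
      exact ⟨_, hadj1 y⟩
    omega
  have hdeg2 : ∀ y : {g : G // g ∉ E}, (y : G) + y ≠ 0 → (y : G) + y ≠ x →
      2 ≤ Γ.degree y := by
    intro y h0 hxy
    have h1 : (⟨(y : G) + x, hmem1 y y.2⟩ : {g : G // g ∉ E}) ∈ Γ.neighborFinset y := by
      rw [SimpleGraph.mem_neighborFinset]; exact hadj1 y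
    have h2 : (⟨x - (y : G), hmem2 y y.2⟩ : {g : G // g ∉ E}) ∈ Γ.neighborFinset y := by
      rw [SimpleGraph.mem_neighborFinset]; exact hadj2 y hxy
    have hne : (⟨(y : G) + x, hmem1 y y.2⟩ : {g : G // g ∉ E}) ≠
        ⟨x - (y : G), hmem2 y y.2⟩ := by
      intro h
      apply h0
      have h' := congrArg Subtype.val h
      simp only at h'
      calc (y : G) + y = ((y : G) + x) - x + y := by abel
        _ = (x - (y : G)) - x + y := by rw [h']
        _ = 0 := by abel
    have := Finset.one_lt_card.mpr ⟨_, h1, _, h2, hne⟩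
    unfold SimpleGraph.degree
    omega
  -- the exceptional set D
  set D : Finset {g : G // g ∉ E} :=
    Finset.univ.filter (fun y => (y : G) + y = 0 ∨ (y : G) + y = x) with hD
  -- sum of degrees lower bound
  have hsplit := Finset.sum_filter_add_sum_filter_not Finset.univ
    (fun y : {g : G // g ∉ E} => (y : G) + y = 0 ∨ (y : G) + y = x) (fun v => Γ.degree v)
  rw [← hD] at hsplit
  have hA : D.card ≤ ∑ v ∈ D, Γ.degree v := by
    calc D.card = ∑ _v ∈ D, 1 := by simp
      _ ≤ _ := Finset.sum_le_sum (fun v _ => hdeg1 v)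
  set Dc : Finset {g : G // g ∉ E} :=
    Finset.univ.filter (fun y => ¬((y : G) + y = 0 ∨ (y : G) + y = x)) with hDc
  have hB : 2 * Dc.card ≤ ∑ v ∈ Dc, Γ.degree v := by
    calc 2 * Dc.card = ∑ _v ∈ Dc, 2 := by simp [mul_comm]
      _ ≤ _ := Finset.sum_le_sum (fun v hv => by
          simp only [hDc, Finset.mem_filter] at hv
          push_neg at hv
          exact hdeg2 v hv.2.1 hv.2.2)
  have hcards : D.card + Dc.card = n := by
    rw [hD, hDc, Finset.card_filter_add_card_filter_not, Finset.card_univ, hcardV]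
  have hsum : 2 * n ≤ (∑ v, Γ.degree v) + D.card := by omega
  -- bounds on D.card
  have hDn : D.card ≤ n := hcardV ▸ Finset.card_le_univ D
  set R : Finset G := Finset.univ.filter (fun a => a + a = 0) with hR
  have hD0 : (Finset.univ.filter (fun y : {g : G // g ∉ E} => (y : G) + y = 0)).card
      ≤ R.card := by
    refine Finset.card_le_card_of_injOn (f := fun y : {g : G // g ∉ E} => (y : G)) ?_ ?_
    · intro a ha
      simp only [hR, Finset.mem_coe, Finset.mem_filter, Finset.mem_univ, true_and] at ha ⊢
      exact ha
    · intro a _ b _ h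
      exact Subtype.ext h
  have hDx : (Finset.univ.filter (fun y : {g : G // g ∉ E} => (y : G) + y = x)).card
      ≤ R.card := by
    rcases Finset.eq_empty_or_nonempty
        (Finset.univ.filter (fun y : {g : G // g ∉ E} => (y : G) + y = x)) with h | ⟨y0, hy0⟩
    · rw [h]; simp
    · simp only [Finset.mem_filter, Finset.mem_univ, true_and] at hy0
      refine Finset.card_le_card_of_injOn
        (f := fun y : {g : G // g ∉ E} => (y : G) - (y0 : G)) ?_ ?_
      · intro a ha
        simp only [hR, Finset.mem_coe, Finset.mem_filter, Finset.mem_univ, true_and] at ha ⊢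
        calc ((a : G) - y0) + ((a : G) - y0) = ((a : G) + a) - ((y0 : G) + y0) := by abel
          _ = x - x := by rw [ha, hy0]
          _ = 0 := by abel
      · intro a _ b _ h
        simp only at h
        exact Subtype.ext (by linear_combination (norm := abel) h)
  have hD2r : D.card ≤ 2 * R.card := by
    have hsub : D ⊆ (Finset.univ.filter (fun y : {g : G // g ∉ E} => (y : G) + y = 0)) ∪
        (Finset.univ.filter (fun y : {g : G // g ∉ E} => (y : G) + y = x)) := by
      intro y hy
      simp only [hD, Finset.mem_filter, Finset.mem_univ, true_and] at hy
      simp only [Finset.mem_union, Finset.mem_filter, Finset.mem_univ, true_and]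
      exact hy
    calc D.card ≤ _ := Finset.card_le_card hsub
      _ ≤ _ + _ := Finset.card_union_le _ _
      _ ≤ 2 * R.card := by omega
  -- edge count
  have hsumdeg : ∑ v, Γ.degree v = 2 * Γ.edgeFinset.card :=
    Γ.sum_degrees_eq_twice_card_edges
  have hedge : Γ.edgeSet.ncard = Γ.edgeFinset.card := by
    rw [Set.ncard_eq_toFinset_card']
    unfold SimpleGraph.edgeFinset
    convert rfl
  have hrcard : ({a : G | a + a = 0}).ncard = R.card := by
    rw [Set.ncard_eq_toFinset_card']
    congr 1
    simp [hR]
  set e := Γ.edgeFinset.card with he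
  have k1 : n ≤ e + R.card := by omega
  have k2 : n ≤ 2 * e := by omega
  rw [hedge, hrcard]
  refine max_le ?_ ?_
  · have : (n : ℚ) ≤ e + R.card := by exact_mod_cast k1
    linarith
  · have : (n : ℚ) ≤ 2 * e := by exact_mod_cast k2
    linarith
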